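/- arXiv:2502.06480 — 3 statements merged into one kernel-verified Lean document; each statement's English description precedes it below -/
import Mathlib

section
/- Let p ∈ (0,1), let (X_i)_{i≥1} be i.i.d. random variables on a probability space with P(X_i = k) = p(1−p)^{k−1} for every integer k ≥ 1 (the geometric distribution on the positive integers with success probability p, so E[X_i] = 1/p), and set S_n := X_1 + ⋯ + X_n. Then for every real c ≥ 2, every real t ≥ 0 and every integer n ≥ 1, P(S_n ≥ c·(n/p + t)) ≤ (1−p)^t · exp(−(2c−3)·n/4). -/
open MeasureTheory ProbabilityTheory
open scoped ENNReal NNReal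

private lemma aux_two_sinh (y : ℝ) (hy : 0 ≤ y) :
    2 * y ≤ Real.exp y - Real.exp (-y) := by
  have hA : 1 + y + y ^ 2 / 2 ≤ Real.exp y := Real.quadratic_le_exp_of_nonneg hy
  have hApos : (0:ℝ) < 1 + y + y ^ 2 / 2 := by positivity
  have hB : Real.exp (-y) ≤ (1 + y + y ^ 2 / 2)⁻¹ := by
    rw [Real.exp_neg]
    exact inv_anti₀ hApos hA
  have h2 : 2 * y ≤ (1 + y + y ^ 2 / 2) - (1 + y + y ^ 2 / 2)⁻¹ := by
    rw [← sub_nonneg]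
    have h3 : (1 + y + y ^ 2 / 2) - (1 + y + y ^ 2 / 2)⁻¹ - 2 * y
        = (y ^ 4 / 4) / (1 + y + y ^ 2 / 2) := by
      field_simp
      ring
    rw [h3]
    positivity
  linarith

private lemma aux_g_mono : MonotoneOn (fun u : ℝ => u + (u + 2) * Real.exp (-u)) (Set.Ici 0) := by
  have hd : ∀ x : ℝ, HasDerivAt (fun u : ℝ => u + (u + 2) * Real.exp (-u))
      (1 + (1 * Real.exp (-x) + (x + 2) * (Real.exp (-x) * -1))) x := by
    intro x
    exact (hasDerivAt_id x).add
      (((hasDerivAt_id x).add_const 2).mul (((hasDerivAt_id x).neg).exp))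
  apply monotoneOn_of_deriv_nonneg (convex_Ici 0)
  · exact Continuous.continuousOn (by continuity)
  · intro x _
    exact (hd x).differentiableAt.differentiableWithinAt
  · intro x _
    rw [(hd x).deriv]
    have hmul : Real.exp x * Real.exp (-x) = 1 := by
      rw [← Real.exp_add]; simp
    nlinarith [mul_le_mul_of_nonneg_right (Real.add_one_le_exp x) (Real.exp_pos (-x)).le,
      (Real.exp_pos (-x)).le]

private lemma aux_u (u : ℝ) (hu : 0 ≤ u) : 2 ≤ u + (u + 2) * Real.exp (-u) := by
  have h := aux_g_mono (Set.self_mem_Ici) (Set.mem_Ici.mpr hu) hu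
  simpa using h

set_option maxHeartbeats 1000000 in
/-- Tails of sums of i.i.d. geometric random variables (success probability `p`,
supported on the positive integers, mean `1/p`):
for `c ≥ 2`, `t ≥ 0` and `n ≥ 1`,
`P(S_n ≥ c (n/p + t)) ≤ (1-p)^t · exp(-(2c-3) n / 4)`. -/
theorem geometric_sum_tail_bound
    {Ω : Type*} [MeasureSpace Ω] [IsProbabilityMeasure (ℙ : Measure Ω)]
    (p : ℝ) (hp0 : 0 < p) (hp1 : p < 1)
    (X : ℕ → Ω → ℕ)
    (hmeas : ∀ i, Measurable (X i))
    (hindep : iIndepFun X ℙ)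
    (hdist : ∀ i, ∀ k : ℕ, 1 ≤ k →
      ℙ {ω | X i ω = k} = ENNReal.ofReal (p * (1 - p) ^ (k - 1)))
    (c t : ℝ) (hc : 2 ≤ c) (ht : 0 ≤ t) (n : ℕ) (hn : 1 ≤ n) :
    ℙ {ω | c * ((n : ℝ) / p + t) ≤ ∑ i ∈ Finset.range n, (X i ω : ℝ)}
      ≤ ENNReal.ofReal ((1 - p) ^ t * Real.exp (-(2 * c - 3) * n / 4)) := by
  set q : ℝ := 1 - p with hq_def
  have hq0 : 0 < q := by simp only [hq_def]; linarith
  have hq1 : q < 1 := by simp only [hq_def]; linarith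
  set u : ℝ := -Real.log q with hu_def
  have hup : p ≤ u := by
    have h := Real.log_le_sub_one_of_pos hq0
    simp only [hu_def, hq_def] at *
    linarith
  have hu0 : 0 < u := lt_of_lt_of_le hp0 hup
  set s : ℝ := u - p / 2 with hs_def
  have hs0 : 0 < s := by simp only [hs_def]; linarith
  set r : ℝ := Real.exp s with hr_def
  have hr0 : 0 < r := Real.exp_pos s
  have hqr : q * r = Real.exp (-(p / 2)) := by
    have hexpu : Real.exp u = q⁻¹ := by
      rw [hu_def, Real.exp_neg, Real.exp_log hq0]
    rw [hr_def, hs_def, show u - p / 2 = u + -(p / 2) by ring, Real.exp_add, hexpu,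
      ← mul_assoc, mul_inv_cancel₀ hq0.ne', one_mul]
  have hE1 : Real.exp (-(p / 2)) < 1 := by
    rw [Real.exp_lt_one_iff]; linarith
  set D : ℝ := 1 - Real.exp (-(p / 2)) with hD_def
  have hD0 : 0 < D := by simp only [hD_def]; linarith
  set M : ℝ := p * r / D with hM_def
  have hM0 : 0 < M := by positivity
  have hqr0 : 0 ≤ q * r := by positivity
  have hqr1 : q * r < 1 := by rw [hqr]; exact hE1
  -- per-coordinate integrability and integral
  have key_i : ∀ i : ℕ, Integrable (fun ω => Real.exp (s * (X i ω : ℝ))) ℙ ∧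
      ∫ ω, Real.exp (s * (X i ω : ℝ)) ∂ℙ = M := by
    intro i
    set ν : Measure ℕ := Measure.map (X i) ℙ with hν_def
    have hν : ∀ k : ℕ, ν {k} = ℙ {ω | X i ω = k} := by
      intro k
      have hpre : X i ⁻¹' {k} = {ω | X i ω = k} := by ext ω; simp
      rw [hν_def, Measure.map_apply (hmeas i) (measurableSet_singleton k), hpre]
    have hν1 : ∀ k : ℕ, ν {k + 1} = ENNReal.ofReal (p * q ^ k) := by
      intro k
      rw [hν (k + 1), hdist i (k + 1) (by omega)]
      simp [hq_def]
    have hsum1 : ∑' k : ℕ, ν {k + 1} = 1 := by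
      simp_rw [hν1]
      rw [← ENNReal.ofReal_tsum_of_nonneg (fun k => by positivity)
        ((summable_geometric_of_lt_one hq0.le hq1).mul_left p)]
      rw [tsum_mul_left, tsum_geometric_of_lt_one hq0.le hq1,
        show (1:ℝ) - q = p by simp [hq_def], mul_inv_cancel₀ hp0.ne', ENNReal.ofReal_one]
    have hν0 : ν {0} = 0 := by
      have hνuniv : ν Set.univ = 1 := by
        have : IsProbabilityMeasure ν := Measure.isProbabilityMeasure_map (hmeas i).aemeasurable
        exact measure_univ
      have huniv_eq : ν Set.univ = ∑' k : ℕ, ν {k} := by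
        rw [show (Set.univ : Set ℕ) = ⋃ k : ℕ, {k} by ext x; simp]
        exact measure_iUnion
          (fun a b hab => by
            simp only [Function.onFun]
            exact Set.disjoint_singleton.mpr hab)
          fun k => measurableSet_singleton k
      rw [hνuniv, tsum_eq_zero_add' ENNReal.summable, hsum1] at huniv_eq
      have h1 : (1 : ℝ≥0∞) ≠ ⊤ := by simp
      nth_rewrite 1 [← zero_add (1 : ℝ≥0∞)] at huniv_eq
      exact (ENNReal.add_left_inj h1).mp huniv_eq.symm
    -- lintegral computation
    have hlin : ∫⁻ ω, ENNReal.ofReal (Real.exp (s * (X i ω : ℝ))) ∂ℙ = ENNReal.ofReal M := by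
      have hmf : Measurable (fun k : ℕ => ENNReal.ofReal (Real.exp (s * (k : ℝ)))) :=
        measurable_of_countable _
      rw [← lintegral_map hmf (hmeas i), ← hν_def, lintegral_countable',
        tsum_eq_zero_add' ENNReal.summable]
      have h0 : ENNReal.ofReal (Real.exp (s * ((0 : ℕ) : ℝ))) * ν {0} = 0 := by
        rw [hν0, mul_zero]
      rw [h0, zero_add]
      have hterm : ∀ k : ℕ, ENNReal.ofReal (Real.exp (s * ((k + 1 : ℕ) : ℝ))) * ν {k + 1}
          = ENNReal.ofReal ((p * r) * (q * r) ^ k) := by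
        intro k
        rw [hν1 k, ← ENNReal.ofReal_mul (Real.exp_nonneg _)]
        congr 1
        have hexp : Real.exp (s * ((k + 1 : ℕ) : ℝ)) = r * r ^ k := by
          push_cast
          rw [show s * ((k : ℝ) + 1) = s + (k : ℕ) * s by push_cast; ring, Real.exp_add,
            Real.exp_nat_mul, ← hr_def]
        rw [hexp, mul_pow]
        ring
      simp_rw [hterm]
      rw [← ENNReal.ofReal_tsum_of_nonneg (fun k => by positivity)
        ((summable_geometric_of_lt_one hqr0 hqr1).mul_left (p * r))]
      congr 1
      rw [tsum_mul_left, tsum_geometric_of_lt_one hqr0 hqr1, hqr, hM_def, hD_def]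
      exact (div_eq_mul_inv _ _).symm
    have hmf' : AEStronglyMeasurable (fun ω => Real.exp (s * (X i ω : ℝ))) ℙ :=
      (Real.measurable_exp.comp
        (measurable_const.mul ((measurable_of_countable _).comp (hmeas i)))).aestronglyMeasurable
    constructor
    · refine ⟨hmf', ?_⟩
      have heq : ∫⁻ ω, ‖Real.exp (s * (X i ω : ℝ))‖ₑ ∂ℙ = ENNReal.ofReal M := by
        rw [← hlin]
        exact lintegral_congr fun ω => Real.enorm_eq_ofReal (Real.exp_nonneg _)
      rw [HasFiniteIntegral, heq]
      exact ENNReal.ofReal_lt_top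
    · rw [integral_eq_lintegral_of_nonneg_ae
        (Filter.Eventually.of_forall fun ω => Real.exp_nonneg _) hmf', hlin,
        ENNReal.toReal_ofReal hM0.le]
  -- independence of the real-valued versions
  set Y : ℕ → Ω → ℝ := fun i ω => (X i ω : ℝ) with hY_def
  have hY_meas : ∀ i, Measurable (Y i) := fun i =>
    (measurable_of_countable _).comp (hmeas i)
  have hY_indep : iIndepFun Y ℙ :=
    hindep.comp (fun _ (k : ℕ) => (k : ℝ)) fun _ => measurable_of_countable _
  have hint : ∀ i ∈ Finset.range n, Integrable (fun ω => Real.exp (s * Y i ω)) ℙ :=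
    fun i _ => (key_i i).1
  have hintsum : Integrable (fun ω => Real.exp (s * (∑ i ∈ Finset.range n, Y i) ω)) ℙ :=
    hY_indep.integrable_exp_mul_sum hY_meas hint
  have hm : mgf (∑ i ∈ Finset.range n, Y i) ℙ s = M ^ n := by
    rw [hY_indep.mgf_sum hY_meas]
    have : ∀ i ∈ Finset.range n, mgf (Y i) ℙ s = M := fun i _ => (key_i i).2
    rw [Finset.prod_congr rfl this, Finset.prod_const, Finset.card_range]
  have hch := measure_ge_le_exp_mul_mgf (μ := ℙ) (X := ∑ i ∈ Finset.range n, Y i)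
    (c * ((n : ℝ) / p + t)) hs0.le hintsum
  rw [hm] at hch
  have hset : {ω | c * ((n : ℝ) / p + t) ≤ ∑ i ∈ Finset.range n, (X i ω : ℝ)}
      = {ω | c * ((n : ℝ) / p + t) ≤ (∑ i ∈ Finset.range n, Y i) ω} := by
    ext ω
    simp [Finset.sum_apply, hY_def]
  -- the purely real inequality
  have hreal : Real.exp (-s * (c * ((n : ℝ) / p + t))) * M ^ n
      ≤ q ^ t * Real.exp (-(2 * c - 3) * n / 4) := by
    have hMn : M ^ n = Real.exp ((n : ℝ) * Real.log M) := by
      rw [Real.exp_nat_mul, Real.exp_log hM0]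
    have hqt : q ^ t = Real.exp (t * Real.log q) := by
      rw [Real.rpow_def_of_pos hq0, mul_comm]
    rw [hMn, hqt, ← Real.exp_add, ← Real.exp_add]
    apply Real.exp_le_exp.mpr
    -- bound log M
    have hD_ge : Real.log p - Real.log 2 - p / 4 ≤ Real.log D := by
      have h2 := aux_two_sinh (p / 4) (by positivity)
      have h4 := mul_le_mul_of_nonneg_right h2 (Real.exp_nonneg (-(p / 4)))
      rw [sub_mul, ← Real.exp_add, ← Real.exp_add] at h4
      have h5 : p / 4 + -(p / 4) = 0 := by ring
      have h6 : -(p / 4) + -(p / 4) = -(p / 2) := by ring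
      rw [h5, h6, Real.exp_zero] at h4
      -- h4 : 2 * (p/4) * exp (-(p/4)) ≤ 1 - exp (-(p/2))
      have h7 : p / 2 * Real.exp (-(p / 4)) ≤ D := by
        rw [hD_def]; linarith
      have h8 : Real.log (p / 2 * Real.exp (-(p / 4))) ≤ Real.log D :=
        Real.log_le_log (by positivity) h7
      rw [Real.log_mul (by positivity) (Real.exp_pos _).ne', Real.log_exp,
        Real.log_div hp0.ne' two_ne_zero] at h8
      linarith
    have hlogM : Real.log M = Real.log p + s - Real.log D := by
      rw [hM_def, Real.log_div (by positivity) hD0.ne', Real.log_mul hp0.ne' hr0.ne',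
        hr_def, Real.log_exp]
    have hlogM_le : Real.log M ≤ s + Real.log 2 + p / 4 := by
      rw [hlogM]; linarith
    have hsc : u ≤ s * c := by
      simp only [hs_def]
      nlinarith [mul_nonneg (sub_nonneg.mpr hc) (by linarith : (0:ℝ) ≤ u - p / 2), hup, hp0.le]
    have hu2 : 2 * p ≤ u * (2 - p) := by
      have h := aux_u u hu0.le
      have he : Real.exp (-u) = q := by
        rw [hu_def, neg_neg, Real.exp_log hq0]
      rw [he, hq_def] at h
      nlinarith [h]
    have hlog2 : Real.log 2 ≤ 0.6931471808 := Real.log_two_lt_d9.le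
    have hN : s + Real.log 2 + p / 4 + (2 * c - 3) / 4 ≤ s * c / p := by
      rw [le_div_iff₀ hp0]
      simp only [hs_def]
      have hcp : (0:ℝ) ≤ c - p := by linarith
      have hF1 := mul_le_mul_of_nonneg_right hu2 hcp
      have hF2 : (0:ℝ) ≤ p * (p * (c - 2)) :=
        mul_nonneg hp0.le (mul_nonneg hp0.le (by linarith))
      have hF3 : (0:ℝ) ≤ p * ((3 / 4 + p / 4 - Real.log 2) * (2 - p)) := by
        apply mul_nonneg hp0.le
        apply mul_nonneg <;> nlinarith
      have hgoal2 : (p * (Real.log 2 + c - 3 / 4 - p / 4)) * (2 - p) ≤ (u * (c - p)) * (2 - p) := by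
        nlinarith [hF1, hF2, hF3]
      have hgoal : p * (Real.log 2 + c - 3 / 4 - p / 4) ≤ u * (c - p) :=
        le_of_mul_le_mul_right hgoal2 (by linarith)
      nlinarith [hgoal]
    have hA : Real.log M - s * c / p ≤ -(2 * c - 3) / 4 := by linarith
    have hA' : (n : ℝ) * (Real.log M - s * c / p) ≤ (n : ℝ) * (-(2 * c - 3) / 4) :=
      mul_le_mul_of_nonneg_left hA (Nat.cast_nonneg n)
    have hB : t * (-(s * c)) ≤ t * (-u) :=
      mul_le_mul_of_nonneg_left (by linarith) ht
    have hlogq : Real.log q = -u := by rw [hu_def]; ring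
    rw [hlogq]
    have e1 : -s * (c * ((n : ℝ) / p + t)) + (n : ℝ) * Real.log M
        = (n : ℝ) * (Real.log M - s * c / p) + t * (-(s * c)) := by
      field_simp
      ring
    rw [e1]
    have e2 : (n : ℝ) * (-(2 * c - 3) / 4) + t * -u = t * -u + -(2 * c - 3) * (n : ℝ) / 4 := by
      ring
    exact (add_le_add hA' hB).trans (le_of_eq e2)
  -- put everything together
  rw [hset, ← ENNReal.ofReal_toReal (measure_ne_top ℙ _)]
  exact ENNReal.ofReal_le_ofReal (le_trans hch hreal)
end

section
/- Let (X_k)_{k≥1} be i.i.d. random variables on a probability space taking values in [0,1], let μ := E[X_1], and let μ̂_n := (1/n)·∑_{k=1}^n X_k denote the empirical mean after n samples. Then for every real x ≥ 0 and every integer m ≥ 1, P(sup_{n ≥ m} (μ̂_n − μ) ≥ x) ≤ exp(−2·m·x²). -/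
open MeasureTheory ProbabilityTheory Real ENNReal


/-- Analytic core of Hoeffding's lemma for `[0,1]`-valued variables. -/
lemma hoeffding_aux {p : ℝ} (hp0 : 0 ≤ p) (hp1 : p ≤ 1) {t : ℝ} (ht : 0 ≤ t) :
    1 - p + p * Real.exp t ≤ Real.exp (t * p + t ^ 2 / 8) := by
  set D : ℝ → ℝ := fun s => 1 - p + p * Real.exp s with hDdef
  have hD : ∀ s, 0 < D s := by
    intro s
    have he := Real.exp_pos s
    rcases eq_or_lt_of_le hp1 with h | h
    · simp only [hDdef, h]
      linarith
    · have h1 : 0 ≤ p * Real.exp s := mul_nonneg hp0 he.le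
      simp only [hDdef]
      linarith
  have hDderiv : ∀ s, HasDerivAt D (p * Real.exp s) s := by
    intro s
    exact ((Real.hasDerivAt_exp s).const_mul p).const_add (1 - p)
  set g : ℝ → ℝ := fun s => p + s / 4 - p * Real.exp s / D s with hgdef
  have hgderiv : ∀ s, HasDerivAt g
      (1 / 4 - (p * Real.exp s * D s - p * Real.exp s * (p * Real.exp s)) / (D s) ^ 2) s := by
    intro s
    have h1 : HasDerivAt (fun u : ℝ => p + u / 4) (1 / 4) s := by
      simpa using ((hasDerivAt_id s).div_const 4).const_add p
    have h2 : HasDerivAt (fun u => p * Real.exp u / D u)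
        ((p * Real.exp s * D s - p * Real.exp s * (p * Real.exp s)) / (D s) ^ 2) s :=
      ((Real.hasDerivAt_exp s).const_mul p).div (hDderiv s) (hD s).ne'
    exact h1.sub h2
  have hgderiv_nonneg : ∀ s, 0 ≤ 1 / 4 -
      (p * Real.exp s * D s - p * Real.exp s * (p * Real.exp s)) / (D s) ^ 2 := by
    intro s
    have hDs := hD s
    have hkey : (p * Real.exp s * D s - p * Real.exp s * (p * Real.exp s)) / (D s) ^ 2 ≤ 1 / 4 := by
      rw [div_le_iff₀ (by positivity)]
      have hDval : D s = 1 - p + p * Real.exp s := rfl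
      nlinarith [sq_nonneg (1 - p - p * Real.exp s)]
    linarith
  have hgmono : Monotone g := by
    apply monotone_of_deriv_nonneg
    · exact fun s => (hgderiv s).differentiableAt
    · intro s
      rw [(hgderiv s).deriv]
      exact hgderiv_nonneg s
  have hg0 : g 0 = 0 := by simp [hgdef, hDdef]
  have hgnonneg : ∀ s, 0 ≤ s → 0 ≤ g s := fun s hs => hg0 ▸ hgmono hs
  set f : ℝ → ℝ := fun s => s * p + s ^ 2 / 8 - Real.log (D s) with hfdef
  have hfderiv : ∀ s, HasDerivAt f (g s) s := by
    intro s
    have h1 : HasDerivAt (fun u : ℝ => u * p) p s := by simpa using (hasDerivAt_id s).mul_const p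
    have h2 : HasDerivAt (fun u : ℝ => u ^ 2 / 8) (s / 4) s := by
      have := (hasDerivAt_pow 2 s).div_const 8
      refine this.congr_deriv ?_
      norm_num
      ring
    have h3 : HasDerivAt (fun u => Real.log (D u)) (p * Real.exp s / D s) s :=
      (hDderiv s).log (hD s).ne'
    exact (h1.add h2).sub h3
  have hfmono : MonotoneOn f (Set.Ici (0 : ℝ)) := by
    apply monotoneOn_of_deriv_nonneg (convex_Ici 0)
    · exact (fun s _ => ((hfderiv s).differentiableAt.continuousAt).continuousWithinAt)
    · exact fun s _ => ((hfderiv s).differentiableAt).differentiableWithinAt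
    · intro s hs
      rw [(hfderiv s).deriv]
      exact hgnonneg s (le_of_lt (by simpa using hs))
  have hf0 : f 0 = 0 := by simp [hfdef, hDdef]
  have hft : 0 ≤ f t := by
    have := hfmono (Set.self_mem_Ici) (Set.mem_Ici.2 ht) ht
    rw [hf0] at this; exact this
  have hlog : Real.log (D t) ≤ t * p + t ^ 2 / 8 := by
    simp only [hfdef] at hft; linarith
  exact (Real.log_le_iff_le_exp (hD t)).mp hlog

lemma mgf_step {Ω : Type*} [MeasureSpace Ω] [IsProbabilityMeasure (ℙ : Measure Ω)]
    {Y : Ω → ℝ} (hYm : Measurable Y) (hYb : ∀ ω, Y ω ∈ Set.Icc (0:ℝ) 1)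
    {μ : ℝ} (hEY : (∫ ω, Y ω) = μ) {t : ℝ} (ht : 0 ≤ t) :
    ∫⁻ ω, ENNReal.ofReal (Real.exp (t * (Y ω - μ) - t ^ 2 / 8)) ∂ℙ ≤ 1 := by
  have hμ0 : 0 ≤ μ := hEY ▸ integral_nonneg (fun ω => (hYb ω).1)
  have intY : Integrable Y ℙ := by
    refine ⟨hYm.aestronglyMeasurable, HasFiniteIntegral.of_bounded (C := 1) (ae_of_all _ ?_)⟩
    intro ω
    rw [Real.norm_eq_abs, abs_le]
    exact ⟨by linarith [(hYb ω).1], (hYb ω).2⟩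
  have hμ1 : μ ≤ 1 := by
    rw [← hEY]
    calc (∫ ω, Y ω) ≤ ∫ _ω, (1 : ℝ) := integral_mono intY (integrable_const 1)
          (fun ω => (hYb ω).2)
    _ = 1 := by simp
  have intE : Integrable (fun ω => Real.exp (t * Y ω)) ℙ := by
    refine ⟨(Real.measurable_exp.comp (hYm.const_mul t)).aestronglyMeasurable,
      HasFiniteIntegral.of_bounded (C := Real.exp t) (ae_of_all _ ?_)⟩
    intro ω
    rw [Real.norm_eq_abs, abs_of_nonneg (Real.exp_nonneg _)]
    exact Real.exp_le_exp.2 (by nlinarith [(hYb ω).1, (hYb ω).2])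
  have hpt : ∀ ω, Real.exp (t * Y ω) ≤ 1 + Y ω * (Real.exp t - 1) := by
    intro ω
    have h := convexOn_exp.2 (Set.mem_univ (0:ℝ)) (Set.mem_univ t)
      (by linarith [(hYb ω).2] : (0:ℝ) ≤ 1 - Y ω) ((hYb ω).1) (by ring)
    simp only [smul_eq_mul, mul_zero, zero_add, Real.exp_zero, mul_one] at h
    calc Real.exp (t * Y ω) = Real.exp (Y ω * t) := by ring_nf
    _ ≤ (1 - Y ω) * 1 + Y ω * Real.exp t := by simpa using h
    _ = 1 + Y ω * (Real.exp t - 1) := by ring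
  have hInt1 : (∫ ω, Real.exp (t * Y ω)) ≤ 1 - μ + μ * Real.exp t := by
    calc (∫ ω, Real.exp (t * Y ω)) ≤ ∫ ω, (1 + Y ω * (Real.exp t - 1)) :=
      integral_mono intE ((integrable_const 1).add (intY.mul_const _)) hpt
    _ = 1 + μ * (Real.exp t - 1) := by
        rw [integral_add (integrable_const 1) (intY.mul_const _), integral_const,
          integral_mul_const, hEY]
        simp
    _ = 1 - μ + μ * Real.exp t := by ring
  have hξeq : ∀ ω, Real.exp (t * (Y ω - μ) - t ^ 2 / 8)
      = Real.exp (-(t * μ) - t ^ 2 / 8) * Real.exp (t * Y ω) := by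
    intro ω
    rw [← Real.exp_add]
    ring_nf
  have intξ : Integrable (fun ω => Real.exp (t * (Y ω - μ) - t ^ 2 / 8)) ℙ := by
    simp_rw [hξeq]
    exact intE.const_mul _
  rw [← ofReal_integral_eq_lintegral_ofReal intξ (ae_of_all _ fun ω => Real.exp_nonneg _)]
  have hle : (∫ ω, Real.exp (t * (Y ω - μ) - t ^ 2 / 8)) ≤ 1 := by
    calc (∫ ω, Real.exp (t * (Y ω - μ) - t ^ 2 / 8))
        = Real.exp (-(t * μ) - t ^ 2 / 8) * ∫ ω, Real.exp (t * Y ω) := by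
          simp_rw [hξeq]; rw [MeasureTheory.integral_const_mul]
    _ ≤ Real.exp (-(t * μ) - t ^ 2 / 8) * (1 - μ + μ * Real.exp t) := by
          apply mul_le_mul_of_nonneg_left hInt1 (Real.exp_nonneg _)
    _ ≤ Real.exp (-(t * μ) - t ^ 2 / 8) * Real.exp (t * μ + t ^ 2 / 8) :=
          mul_le_mul_of_nonneg_left (hoeffding_aux hμ0 hμ1 ht) (Real.exp_nonneg _)
    _ = 1 := by rw [← Real.exp_add]; ring_nf; exact Real.exp_zero
  calc ENNReal.ofReal (∫ ω, Real.exp (t * (Y ω - μ) - t ^ 2 / 8)) ≤ ENNReal.ofReal 1 :=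
        ENNReal.ofReal_le_ofReal hle
  _ = 1 := ENNReal.ofReal_one

lemma uniform_bound {Ω : Type*} [MeasureSpace Ω] [IsProbabilityMeasure (ℙ : Measure Ω)]
    (X : ℕ → Ω → ℝ) (hmeas : ∀ i, Measurable (X i))
    (hindep : iIndepFun X ℙ)
    (hbound : ∀ i ω, X i ω ∈ Set.Icc (0 : ℝ) 1)
    (μ : ℝ) (hEX : ∀ i, (∫ ω, X i ω) = μ)
    (m : ℕ) (hm : 1 ≤ m) {y : ℝ} (hy : 0 < y) :
    ℙ (⋃ n, ⋃ (_ : m ≤ n), {ω | y ≤ (∑ k ∈ Finset.range n, X k ω) / n - μ})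
      ≤ ENNReal.ofReal (Real.exp (-2 * m * y ^ 2)) := by
  classical
  set t : ℝ := 4 * y with htdef
  have ht : 0 ≤ t := by positivity
  set S : ℕ → Ω → ℝ := fun n ω => ∑ k ∈ Finset.range n, X k ω with hSdef
  have hSmeas : ∀ n, Measurable (S n) := fun n => Finset.measurable_sum _ (fun k _ => hmeas k)
  set M : ℕ → Ω → ℝ := fun n ω => Real.exp (t * (S n ω - n * μ) - n * (t ^ 2 / 8)) with hMdef
  have hMmeas : ∀ n, Measurable (M n) := fun n =>
    Real.measurable_exp.comp ((((hSmeas n).sub measurable_const).const_mul t).sub measurable_const)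
  have hMpos : ∀ n ω, 0 < M n ω := fun n ω => Real.exp_pos _
  have hM0 : ∀ ω, M 0 ω = 1 := by intro ω; simp [hMdef, hSdef]
  have hMsucc : ∀ n ω, M (n + 1) ω = M n ω * Real.exp (t * (X n ω - μ) - t ^ 2 / 8) := by
    intro n ω
    simp only [hMdef, hSdef]
    rw [← Real.exp_add, Real.exp_eq_exp, Finset.sum_range_succ]
    push_cast
    ring
  set a : ℝ := Real.exp (2 * m * y ^ 2) with hadef
  set aE : ℝ≥0∞ := ENNReal.ofReal a with haEdef
  set B : ℕ → Set Ω := fun n => {ω | a ≤ M n ω} ∩ (⋂ (k) (_ : k < n), {ω | M k ω < a}) with hBdef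
  set C : ℕ → Set Ω := fun n => ⋂ (k) (_ : k ≤ n), {ω | M k ω < a} with hCdef
  have hBmeas : ∀ n, MeasurableSet (B n) := fun n =>
    (measurableSet_le measurable_const (hMmeas n)).inter
      (MeasurableSet.iInter fun k => MeasurableSet.iInter fun _ =>
        measurableSet_lt (hMmeas k) measurable_const)
  have hCmeas : ∀ n, MeasurableSet (C n) :=
    fun n => MeasurableSet.iInter fun k => MeasurableSet.iInter fun _ =>
      measurableSet_lt (hMmeas k) measurable_const
  have hBC : ∀ n, aE * ℙ (B n) ≤ ∫⁻ ω in B n, ENNReal.ofReal (M n ω) ∂ℙ := by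
    intro n
    rw [← setLIntegral_const (B n) aE]
    refine setLIntegral_mono (ENNReal.measurable_ofReal.comp (hMmeas n)) ?_
    intro ω hω
    exact ENNReal.ofReal_le_ofReal hω.1
  -- one-step supermartingale inequality via independence
  have hstep : ∀ n, ∫⁻ ω in C n, ENNReal.ofReal (M (n + 1) ω) ∂ℙ
      ≤ ∫⁻ ω in C n, ENNReal.ofReal (M n ω) ∂ℙ := by
    intro n
    set Mf : MeasurableSpace Ω := ⨆ k ∈ {k : ℕ | k < n}, MeasurableSpace.comap (X k) Real.measurableSpace
      with hMfdef
    set Mg : MeasurableSpace Ω := ⨆ k ∈ ({n} : Set ℕ), MeasurableSpace.comap (X k) Real.measurableSpace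
      with hMgdef
    have hMfle : Mf ≤ (MeasureSpace.toMeasurableSpace : MeasurableSpace Ω) :=
      iSup₂_le fun k _ => (hmeas k).comap_le
    have hMgle : Mg ≤ (MeasureSpace.toMeasurableSpace : MeasurableSpace Ω) :=
      iSup₂_le fun k _ => (hmeas k).comap_le
    have hInd : Indep Mf Mg ℙ := by
      refine indep_iSup_of_disjoint (fun i => (hmeas i).comap_le) ?_ ?_
      · exact (iIndepFun_iff_iIndep _ _ _).mp hindep
      · rw [Set.disjoint_left]
        intro k hk hk'
        simp only [Set.mem_setOf_eq] at hk
        simp only [Set.mem_singleton_iff] at hk'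
        omega
    have hXk : ∀ k, k < n → Measurable[Mf] (X k) := fun k hk =>
      Measurable.of_comap_le (le_biSup (fun k => MeasurableSpace.comap (X k) Real.measurableSpace) (show k ∈ {k : ℕ | k < n} from hk))
    have hXn : Measurable[Mg] (X n) :=
      Measurable.of_comap_le (le_biSup (fun k => MeasurableSpace.comap (X k) Real.measurableSpace) (Set.mem_singleton n))
    have hMf_meas : ∀ j, j ≤ n → Measurable[Mf] (M j) := by
      intro j hj
      have hSj : Measurable[Mf] (S j) :=
        Finset.measurable_sum _ (fun k hk => hXk k (lt_of_lt_of_le (Finset.mem_range.1 hk) hj))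
      exact Real.measurable_exp.comp (((hSj.sub measurable_const).const_mul t).sub measurable_const)
    have hCMf : MeasurableSet[Mf] (C n) :=
      MeasurableSet.iInter fun k => MeasurableSet.iInter fun hk =>
        measurableSet_lt (hMf_meas k hk) measurable_const
    set F : Ω → ℝ≥0∞ := (C n).indicator (fun ω => ENNReal.ofReal (M n ω)) with hFdef
    set G : Ω → ℝ≥0∞ := fun ω => ENNReal.ofReal (Real.exp (t * (X n ω - μ) - t ^ 2 / 8))
      with hGdef
    have hFmeas : Measurable[Mf] F :=
      Measurable.indicator (ENNReal.measurable_ofReal.comp (hMf_meas n le_rfl)) hCMf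
    have hGmeas : Measurable[Mg] G :=
      ENNReal.measurable_ofReal.comp (Real.measurable_exp.comp
        (((hXn.sub measurable_const).const_mul t).sub measurable_const))
    have hptwise : (C n).indicator (fun ω => ENNReal.ofReal (M (n + 1) ω)) = fun ω => F ω * G ω := by
      funext ω
      by_cases hω : ω ∈ C n
      · simp only [Set.indicator_of_mem hω, hFdef, hGdef, hMsucc n ω,
          ENNReal.ofReal_mul (hMpos n ω).le]
      · simp [Set.indicator_of_notMem hω, hFdef]
    calc ∫⁻ ω in C n, ENNReal.ofReal (M (n + 1) ω) ∂ℙ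
        = ∫⁻ ω, (C n).indicator (fun ω => ENNReal.ofReal (M (n + 1) ω)) ω ∂ℙ := by
          rw [lintegral_indicator (hCmeas n)]
      _ = ∫⁻ ω, F ω * G ω ∂ℙ := by rw [hptwise]
      _ = (∫⁻ ω, F ω ∂ℙ) * ∫⁻ ω, G ω ∂ℙ :=
          lintegral_mul_eq_lintegral_mul_lintegral_of_independent_measurableSpace
            hMfle hMgle hInd hFmeas hGmeas
      _ ≤ (∫⁻ ω, F ω ∂ℙ) * 1 :=
          mul_le_mul_right (mgf_step (hmeas n) (hbound n) (hEX n) ht) _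
      _ = ∫⁻ ω in C n, ENNReal.ofReal (M n ω) ∂ℙ := by
          rw [mul_one, hFdef, lintegral_indicator (hCmeas n)]
  -- main induction (Ville's inequality, finite horizon)
  have hmain : ∀ n, (∑ j ∈ Finset.range (n + 1), aE * ℙ (B j))
      + ∫⁻ ω in C n, ENNReal.ofReal (M n ω) ∂ℙ ≤ 1 := by
    intro n
    induction n with
    | zero =>
      have hint : ∀ s : Set Ω, ∫⁻ ω in s, ENNReal.ofReal (M 0 ω) ∂ℙ = ℙ s := by
        intro s
        simp_rw [hM0, ENNReal.ofReal_one]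
        exact setLIntegral_one s
      have hdisj : Disjoint (B 0) (C 0) := by
        rw [Set.disjoint_left]
        intro ω hωB hωC
        have h1 : a ≤ M 0 ω := hωB.1
        have h2 : M 0 ω < a := by
          have := Set.mem_iInter.1 hωC 0
          exact Set.mem_iInter.1 this le_rfl
        linarith
      calc (∑ j ∈ Finset.range 1, aE * ℙ (B j)) + ∫⁻ ω in C 0, ENNReal.ofReal (M 0 ω) ∂ℙ
          = aE * ℙ (B 0) + ℙ (C 0) := by rw [Finset.sum_range_one, hint]
        _ ≤ ∫⁻ ω in B 0, ENNReal.ofReal (M 0 ω) ∂ℙ + ℙ (C 0) := add_le_add_left (hBC 0) _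
        _ = ℙ (B 0) + ℙ (C 0) := by rw [hint]
        _ = ℙ (B 0 ∪ C 0) := (measure_union hdisj (hCmeas 0)).symm
        _ ≤ 1 := prob_le_one
    | succ n ih =>
      have hsplit : C n = B (n + 1) ∪ C (n + 1) := by
        ext ω
        simp only [hBdef, hCdef, Set.mem_iInter, Set.mem_union, Set.mem_inter_iff,
          Set.mem_setOf_eq]
        constructor
        · intro h
          rcases le_or_gt a (M (n + 1) ω) with hle | hlt
          · exact Or.inl ⟨hle, fun k hk => h k (by omega)⟩
          · refine Or.inr (fun k hk => ?_)
            rcases eq_or_lt_of_le hk with rfl | hk'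
            · exact hlt
            · exact h k (by omega)
        · intro h k hk
          rcases h with h | h
          · exact h.2 k (by omega)
          · exact h k (by omega)
      have hdisj : Disjoint (B (n + 1)) (C (n + 1)) := by
        rw [Set.disjoint_left]
        intro ω hωB hωC
        have h2 : M (n + 1) ω < a := by
          have := Set.mem_iInter.1 hωC (n + 1)
          exact Set.mem_iInter.1 this le_rfl
        exact absurd hωB.1 (not_le.2 h2)
      calc (∑ j ∈ Finset.range (n + 2), aE * ℙ (B j))
            + ∫⁻ ω in C (n + 1), ENNReal.ofReal (M (n + 1) ω) ∂ℙ
          = (∑ j ∈ Finset.range (n + 1), aE * ℙ (B j)) + (aE * ℙ (B (n + 1))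
            + ∫⁻ ω in C (n + 1), ENNReal.ofReal (M (n + 1) ω) ∂ℙ) := by
            rw [Finset.sum_range_succ]; ring
        _ ≤ (∑ j ∈ Finset.range (n + 1), aE * ℙ (B j)) + (∫⁻ ω in B (n + 1),
              ENNReal.ofReal (M (n + 1) ω) ∂ℙ
            + ∫⁻ ω in C (n + 1), ENNReal.ofReal (M (n + 1) ω) ∂ℙ) :=
            add_le_add_right (add_le_add_left (hBC (n + 1)) _) _
        _ = (∑ j ∈ Finset.range (n + 1), aE * ℙ (B j))
            + ∫⁻ ω in C n, ENNReal.ofReal (M (n + 1) ω) ∂ℙ := by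
            rw [hsplit, lintegral_union (hCmeas (n + 1)) hdisj]
        _ ≤ (∑ j ∈ Finset.range (n + 1), aE * ℙ (B j))
            + ∫⁻ ω in C n, ENNReal.ofReal (M n ω) ∂ℙ := add_le_add_right (hstep n) _
        _ ≤ 1 := ih
  -- finite-horizon bound on the event of interest
  have hNbound : ∀ N : ℕ, ℙ (⋃ n, ⋃ (_ : n ≤ N), ⋃ (_ : m ≤ n),
      {ω | y ≤ (∑ k ∈ Finset.range n, X k ω) / n - μ}) ≤ ENNReal.ofReal (Real.exp (-2 * m * y ^ 2)) := by
    intro N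
    have hA_sub : ∀ n, m ≤ n → {ω | y ≤ (∑ k ∈ Finset.range n, X k ω) / n - μ}
        ⊆ {ω | a ≤ M n ω} := by
      intro n hn ω hω
      simp only [Set.mem_setOf_eq] at hω ⊢
      have hnpos : (0 : ℝ) < n := by
        have : 1 ≤ n := le_trans hm hn
        exact_mod_cast Nat.pos_of_ne_zero (by omega)
      have hS : (n : ℝ) * y ≤ S n ω - n * μ := by
        have h1 : y + μ ≤ S n ω / n := by simpa [hSdef] using (by linarith : y + μ ≤ (∑ k ∈ Finset.range n, X k ω) / n)
        have h2 := (le_div_iff₀ hnpos).mp h1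
        nlinarith
      have hmn : (m : ℝ) ≤ (n : ℝ) := by exact_mod_cast hn
      rw [hadef, hMdef]
      apply Real.exp_le_exp.2
      have h3 : 4 * y * ((n : ℝ) * y) ≤ 4 * y * (S n ω - n * μ) :=
        mul_le_mul_of_nonneg_left hS (by positivity)
      rw [htdef]
      nlinarith [sq_nonneg y]
    have hsub2 : (⋃ n, ⋃ (_ : n ≤ N), ⋃ (_ : m ≤ n),
        {ω | y ≤ (∑ k ∈ Finset.range n, X k ω) / n - μ}) ⊆ ⋃ j ∈ Finset.range (N + 1), B j := by
      intro ω hω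
      simp only [Set.mem_iUnion] at hω
      obtain ⟨n, hnN, hmn, hω⟩ := hω
      have han : a ≤ M n ω := hA_sub n hmn hω
      have hex : ∃ k, a ≤ M k ω := ⟨n, han⟩
      have hk0 : Nat.find hex ∈ Finset.range (N + 1) :=
        Finset.mem_range.2 (Nat.lt_succ_of_le (le_trans (Nat.find_min' hex han) hnN))
      exact Set.mem_biUnion hk0 ⟨Nat.find_spec hex, Set.mem_iInter.2 fun k =>
        Set.mem_iInter.2 fun hk => not_le.1 (Nat.find_min hex hk)⟩
    have hmeasle : aE * ℙ (⋃ n, ⋃ (_ : n ≤ N), ⋃ (_ : m ≤ n),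
        {ω | y ≤ (∑ k ∈ Finset.range n, X k ω) / n - μ}) ≤ 1 := by
      calc aE * ℙ (⋃ n, ⋃ (_ : n ≤ N), ⋃ (_ : m ≤ n),
            {ω | y ≤ (∑ k ∈ Finset.range n, X k ω) / n - μ})
          ≤ aE * ℙ (⋃ j ∈ Finset.range (N + 1), B j) :=
            mul_le_mul_right (measure_mono hsub2) _
        _ ≤ aE * ∑ j ∈ Finset.range (N + 1), ℙ (B j) :=
            mul_le_mul_right (measure_biUnion_finset_le _ _) _
        _ = ∑ j ∈ Finset.range (N + 1), aE * ℙ (B j) := Finset.mul_sum _ _ _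
        _ ≤ 1 := le_trans le_self_add (hmain N)
    have haE_inv : aE⁻¹ = ENNReal.ofReal (Real.exp (-2 * m * y ^ 2)) := by
      rw [haEdef, hadef, ← ENNReal.ofReal_inv_of_pos (Real.exp_pos _), ← Real.exp_neg]
      congr 1
      ring
    rw [← haE_inv]
    rw [ENNReal.le_inv_iff_mul_le, mul_comm]
    exact hmeasle
  -- pass to the limit N → ∞
  have hUeq : (⋃ n, ⋃ (_ : m ≤ n), {ω | y ≤ (∑ k ∈ Finset.range n, X k ω) / n - μ})
      = ⋃ N, (⋃ n, ⋃ (_ : n ≤ N), ⋃ (_ : m ≤ n),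
        {ω | y ≤ (∑ k ∈ Finset.range n, X k ω) / n - μ}) := by
    ext ω
    simp only [Set.mem_iUnion]
    constructor
    · rintro ⟨n, hn, h⟩
      exact ⟨n, n, le_rfl, hn, h⟩
    · rintro ⟨N, n, _, hn, h⟩
      exact ⟨n, hn, h⟩
  have hmono : Monotone (fun N => ⋃ n, ⋃ (_ : n ≤ N), ⋃ (_ : m ≤ n),
      {ω | y ≤ (∑ k ∈ Finset.range n, X k ω) / n - μ}) := by
    intro N1 N2 hN ω hω
    simp only [Set.mem_iUnion] at hω ⊢
    obtain ⟨n, hn, h1, h2⟩ := hω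
    exact ⟨n, le_trans hn hN, h1, h2⟩
  rw [hUeq, hmono.measure_iUnion]
  exact iSup_le hNbound


/-- Maximal (time-uniform) version of Hoeffding's inequality: for i.i.d. `[0,1]`-valued
random variables with mean `μ` and empirical means `μ̂_n`, for every `x ≥ 0` and `m ≥ 1`,
`P(sup_{n ≥ m} (μ̂_n − μ) ≥ x) ≤ exp(−2 m x²)`. -/
theorem maximal_hoeffding
    {Ω : Type*} [MeasureSpace Ω] [IsProbabilityMeasure (ℙ : Measure Ω)]
    (X : ℕ → Ω → ℝ)
    (hmeas : ∀ i, Measurable (X i))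
    (hindep : iIndepFun X ℙ)
    (hident : ∀ i, Measure.map (X i) ℙ = Measure.map (X 0) ℙ)
    (hbound : ∀ i ω, X i ω ∈ Set.Icc (0 : ℝ) 1)
    (μ : ℝ) (hμ : μ = ∫ ω, X 0 ω)
    (x : ℝ) (hx : 0 ≤ x) (m : ℕ) (hm : 1 ≤ m) :
    ℙ {ω | x ≤ ⨆ n : {k : ℕ // m ≤ k},
        ((∑ k ∈ Finset.range (n : ℕ), X k ω) / ((n : ℕ) : ℝ) - μ)}
      ≤ ENNReal.ofReal (Real.exp (-2 * m * x ^ 2)) := by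
  rcases eq_or_lt_of_le hx with h | hxpos
  · rw [← h]
    norm_num
    exact prob_le_one
  have hEX : ∀ i, (∫ ω, X i ω) = μ := by
    intro i
    have h1 : ∫ ω, X i ω ∂ℙ = ∫ z, id z ∂(Measure.map (X i) ℙ) :=
      (integral_map (hmeas i).aemeasurable aestronglyMeasurable_id).symm
    rw [h1, hident i, integral_map (hmeas 0).aemeasurable aestronglyMeasurable_id, hμ]
    rfl
  have hbound2 : ∀ y : ℝ, 0 < y → y < x →
      ℙ {ω | x ≤ ⨆ n : {k : ℕ // m ≤ k},
        ((∑ k ∈ Finset.range (n : ℕ), X k ω) / ((n : ℕ) : ℝ) - μ)}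
      ≤ ENNReal.ofReal (Real.exp (-2 * m * y ^ 2)) := by
    intro y hy hyx
    refine le_trans (measure_mono ?_) (uniform_bound X hmeas hindep hbound μ hEX m hm hy)
    intro ω hω
    simp only [Set.mem_setOf_eq] at hω
    have hne : Nonempty {k : ℕ // m ≤ k} := ⟨⟨m, le_rfl⟩⟩
    have h2 : y < ⨆ n : {k : ℕ // m ≤ k},
        ((∑ k ∈ Finset.range (n : ℕ), X k ω) / ((n : ℕ) : ℝ) - μ) := lt_of_lt_of_le hyx hω
    obtain ⟨n, hn⟩ := exists_lt_of_lt_ciSup h2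
    exact Set.mem_iUnion.2 ⟨n.1, Set.mem_iUnion.2 ⟨n.2, le_of_lt hn⟩⟩
  have hne : (nhdsWithin x (Set.Iio x)).NeBot := inferInstance
  have htend : Filter.Tendsto (fun y : ℝ => ENNReal.ofReal (Real.exp (-2 * m * y ^ 2)))
      (nhdsWithin x (Set.Iio x)) (nhds (ENNReal.ofReal (Real.exp (-2 * m * x ^ 2)))) := by
    apply Filter.Tendsto.mono_left _ nhdsWithin_le_nhds
    exact (ENNReal.continuous_ofReal.comp (Real.continuous_exp.comp (by continuity))).tendsto x
  have hev : ∀ᶠ y in nhdsWithin x (Set.Iio x),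
      ℙ {ω | x ≤ ⨆ n : {k : ℕ // m ≤ k},
        ((∑ k ∈ Finset.range (n : ℕ), X k ω) / ((n : ℕ) : ℝ) - μ)}
      ≤ ENNReal.ofReal (Real.exp (-2 * m * y ^ 2)) := by
    have h1 : ∀ᶠ y in nhdsWithin x (Set.Iio x), 0 < y :=
      eventually_nhdsWithin_of_eventually_nhds (eventually_gt_nhds hxpos)
    filter_upwards [h1, self_mem_nhdsWithin] with y hy1 hy2
    exact hbound2 y hy1 hy2
  exact ge_of_tendsto htend hev
end

section
/- Let S be a finite nonempty set. Let P, P̂ : S × S → ℝ be row-stochastic matrices (all entries nonnegative and every row sums to 1), let r, r̂ : S → ℝ, let g ∈ ℝ and h : S → ℝ satisfy the Poisson equation g + h(s) = r(s) + ∑_{s'∈S} P(s,s')·h(s') for every s ∈ S, and let μ̂ : S → ℝ be a stationary distribution of P̂, i.e., μ̂(s) ≥ 0 for all s, ∑_{s∈S} μ̂(s) = 1, and ∑_{s∈S} μ̂(s)·P̂(s,s') = μ̂(s') for every s' ∈ S. Then |∑_{s∈S} μ̂(s)·r̂(s) − g| ≤ max_{s∈S} ( |r̂(s) − r(s)| +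 (1/2)·(max_{s'} h(s') − min_{s'} h(s'))·∑_{s'∈S} |P̂(s,s') − P(s,s')| ). -/
/-- Sensibility of the gain to parameters: if `(g, h)` solves the Poisson equation
`g + h = r + P h` for the row-stochastic matrix `P`, and `μ̂` is a stationary
distribution of the row-stochastic matrix `P̂`, then the perturbed gain `∑ μ̂ r̂`
deviates from `g` by at most
`max_s ( |r̂(s) − r(s)| + (1/2)·sp(h)·‖P̂(s,·) − P(s,·)‖₁ )`. -/
theorem gain_deviation {S : Type*} [Fintype S] [Nonempty S]
    (P Phat : S → S → ℝ) (r rhat : S → ℝ) (g : ℝ) (h : S → ℝ) (μhat : S → ℝ)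
    (hP0 : ∀ s s', 0 ≤ P s s') (hProw : ∀ s, ∑ s', P s s' = 1)
    (hPhat0 : ∀ s s', 0 ≤ Phat s s') (hPhatrow : ∀ s, ∑ s', Phat s s' = 1)
    (hPoisson : ∀ s, g + h s = r s + ∑ s', P s s' * h s')
    (hμ0 : ∀ s, 0 ≤ μhat s) (hμsum : ∑ s, μhat s = 1)
    (hstat : ∀ s', ∑ s, μhat s * Phat s s' = μhat s') :
    |(∑ s, μhat s * rhat s) - g| ≤
      Finset.univ.sup' Finset.univ_nonempty (fun s =>
        |rhat s - r s| +
          (1 / 2) * (Finset.univ.sup' Finset.univ_nonempty h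
                      - Finset.univ.inf' Finset.univ_nonempty h)
            * ∑ s', |Phat s s' - P s s'|) := by
  classical
  set M := Finset.univ.sup' Finset.univ_nonempty h with hMdef
  set m := Finset.univ.inf' Finset.univ_nonempty h with hmdef
  have hhM : ∀ s, h s ≤ M := fun s => Finset.le_sup' h (Finset.mem_univ s)
  have hhm : ∀ s, m ≤ h s := fun s => Finset.inf'_le h (Finset.mem_univ s)
  set c : ℝ := (M + m) / 2 with hcdef
  -- key identity
  have hswap : ∑ s, μhat s * ∑ s', Phat s s' * h s' = ∑ s, μhat s * h s := by
    simp_rw [Finset.mul_sum]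
    rw [Finset.sum_comm]
    simp_rw [← mul_assoc, ← Finset.sum_mul, hstat]
  have key : (∑ s, μhat s * rhat s) - g
      = ∑ s, μhat s * ((rhat s - r s) + ∑ s', (Phat s s' - P s s') * h s') := by
    have expand : ∀ s, μhat s * ((rhat s - r s) + ∑ s', (Phat s s' - P s s') * h s')
        = μhat s * rhat s - μhat s * r s
          + μhat s * (∑ s', Phat s s' * h s') - μhat s * (∑ s', P s s' * h s') := by
      intro s
      rw [show (∑ s', (Phat s s' - P s s') * h s')
          = (∑ s', Phat s s' * h s') - (∑ s', P s s' * h s') by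
        rw [← Finset.sum_sub_distrib]; exact Finset.sum_congr rfl fun _ _ => by ring]
      ring
    simp_rw [expand]
    rw [Finset.sum_sub_distrib, Finset.sum_add_distrib, Finset.sum_sub_distrib, hswap]
    have hr : ∀ s, μhat s * r s = μhat s * g + μhat s * h s
        - μhat s * (∑ s', P s s' * h s') := by
      intro s
      have hr' : r s = g + h s - ∑ s', P s s' * h s' := by linarith [hPoisson s]
      rw [hr']; ring
    simp_rw [hr]
    rw [Finset.sum_sub_distrib, Finset.sum_add_distrib, ← Finset.sum_mul, hμsum]
    ring
  rw [key]
  -- bound each term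
  have hbound : ∀ s, |(rhat s - r s) + ∑ s', (Phat s s' - P s s') * h s'|
      ≤ |rhat s - r s| + (1 / 2) * (M - m) * ∑ s', |Phat s s' - P s s'| := by
    intro s
    refine (abs_add_le _ _).trans (add_le_add_right ?_ _)
    have hzero : ∑ s', (Phat s s' - P s s') = 0 := by
      rw [Finset.sum_sub_distrib, hPhatrow, hProw]; ring
    have hshift : ∑ s', (Phat s s' - P s s') * h s'
        = ∑ s', (Phat s s' - P s s') * (h s' - c) := by
      simp_rw [mul_sub]
      rw [Finset.sum_sub_distrib, ← Finset.sum_mul, hzero]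
      ring
    rw [hshift]
    calc |∑ s', (Phat s s' - P s s') * (h s' - c)|
        ≤ ∑ s', |(Phat s s' - P s s') * (h s' - c)| := Finset.abs_sum_le_sum_abs _ _
      _ ≤ ∑ s', |Phat s s' - P s s'| * ((M - m) / 2) := by
          refine Finset.sum_le_sum fun s' _ => ?_
          rw [abs_mul]
          refine mul_le_mul_of_nonneg_left ?_ (abs_nonneg _)
          rw [abs_le]
          constructor <;> [linarith [hhm s']; linarith [hhM s']]
      _ = (1 / 2) * (M - m) * ∑ s', |Phat s s' - P s s'| := by
          rw [← Finset.sum_mul]; ring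
  -- combine
  set B := Finset.univ.sup' Finset.univ_nonempty (fun s =>
    |rhat s - r s| + (1 / 2) * (M - m) * ∑ s', |Phat s s' - P s s'|) with hBdef
  calc |∑ s, μhat s * ((rhat s - r s) + ∑ s', (Phat s s' - P s s') * h s')|
      ≤ ∑ s, |μhat s * ((rhat s - r s) + ∑ s', (Phat s s' - P s s') * h s')| :=
        Finset.abs_sum_le_sum_abs _ _
    _ ≤ ∑ s, μhat s * B := by
        refine Finset.sum_le_sum fun s _ => ?_
        rw [abs_mul, abs_of_nonneg (hμ0 s)]
        refine mul_le_mul_of_nonneg_left ((hbound s).trans ?_) (hμ0 s)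
        rw [hBdef]
        exact Finset.le_sup' (fun s => |rhat s - r s|
          + (1 / 2) * (M - m) * ∑ s', |Phat s s' - P s s'|) (Finset.mem_univ s)
    _ = B := by rw [← Finset.sum_mul, hμsum, one_mul]
end
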